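/- Let n ≥ 2 and let G_n be the dicyclic group of order 4n. Then G_n is not isomorphic to any cyclic group ℤ/m, nor to any dihedral group of order 2m, nor to the alternating group A₄, nor to the symmetric group S₄, nor to the alternating group A₅. -/

import Mathlib

section DicyclicAux

open QuaternionGroup

/-- In the dicyclic group with `n ≥ 2`, every element of order 2 equals `a n`. -/
lemma quat_orderTwo {n : ℕ} (hn : 2 ≤ n) {g : QuaternionGroup n} (hg : orderOf g = 2) :
    g = QuaternionGroup.a (n : ZMod (2 * n)) := by
  haveI : NeZero n := ⟨by omega⟩
  cases g with
  | xa i => rw [QuaternionGroup.orderOf_xa] at hg; omega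
  | a i =>
    have h1 : QuaternionGroup.a i ^ 2 = 1 := by rw [← hg]; exact pow_orderOf_eq_one _
    have h2 : QuaternionGroup.a i ≠ 1 := by
      intro h; rw [h, orderOf_one] at hg; omega
    have hii : i + i = 0 := by
      have : QuaternionGroup.a (i + i) = QuaternionGroup.a 0 := by
        rw [sq, QuaternionGroup.a_mul_a, QuaternionGroup.one_def] at h1; exact h1
      exact QuaternionGroup.a.inj this
    have hi0 : i ≠ 0 := fun h => h2 (by rw [h]; rfl)
    have hv : ((2 * i.val : ℕ) : ZMod (2 * n)) = 0 := by
      push_cast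
      rw [ZMod.natCast_zmod_val]
      linear_combination hii
    have hdvd : 2 * n ∣ 2 * i.val := (ZMod.natCast_eq_zero_iff _ _).mp hv
    have hdvd' : n ∣ i.val := (mul_dvd_mul_iff_left (two_ne_zero)).mp hdvd
    obtain ⟨k, hk⟩ := hdvd'
    have hlt : i.val < 2 * n := ZMod.val_lt i
    have hvne : i.val ≠ 0 := by
      intro h
      apply hi0
      rw [← ZMod.natCast_zmod_val i, h, Nat.cast_zero]
    have hk1 : k = 1 := by
      rcases Nat.lt_or_ge k 2 with h | h
      · interval_cases k <;> omega
      · exfalso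
        have : 2 * n ≤ n * k := by nlinarith
        omega
    have : i.val = n := by subst hk1; simpa using hk
    rw [← ZMod.natCast_zmod_val i, this]

/-- If `H` has two distinct elements of order 2, it is not isomorphic to the dicyclic group. -/
lemma no_iso_of_two_two {n : ℕ} (hn : 2 ≤ n) {H : Type*} [Group H] {x y : H}
    (hx : orderOf x = 2) (hy : orderOf y = 2) (hxy : x ≠ y) :
    IsEmpty (QuaternionGroup n ≃* H) := by
  constructor
  intro e
  have h1 : orderOf (e.symm x) = 2 :=
    (orderOf_injective e.symm.toMonoidHom e.symm.injective x).trans hx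
  have h2 : orderOf (e.symm y) = 2 :=
    (orderOf_injective e.symm.toMonoidHom e.symm.injective y).trans hy
  exact hxy (e.symm.injective ((quat_orderTwo hn h1).trans (quat_orderTwo hn h2).symm))

end DicyclicAux

/-- For `n ≥ 2`, the dicyclic group `G_n` (Mathlib's `QuaternionGroup n`, of order `4n`)
is not isomorphic to any cyclic group `ℤ/m`, nor to any dihedral group of order `2m`,
nor to `A₄`, nor to `S₄`, nor to `A₅`. -/
theorem dicyclic_not_spherical (n : ℕ) (hn : 2 ≤ n) :
    (∀ m : ℕ, IsEmpty (QuaternionGroup n ≃* Multiplicative (ZMod m))) ∧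
    (∀ m : ℕ, IsEmpty (QuaternionGroup n ≃* DihedralGroup m)) ∧
    IsEmpty (QuaternionGroup n ≃* alternatingGroup (Fin 4)) ∧
    IsEmpty (QuaternionGroup n ≃* Equiv.Perm (Fin 4)) ∧
    IsEmpty (QuaternionGroup n ≃* alternatingGroup (Fin 5)) := by
  haveI : NeZero n := ⟨by omega⟩
  haveI : Fact (Nat.Prime 2) := ⟨Nat.prime_two⟩
  refine ⟨?_, ?_, ?_, ?_, ?_⟩
  · -- cyclic: the dicyclic group is not abelian
    intro m
    constructor
    intro e
    have hcomm : QuaternionGroup.a 1 * QuaternionGroup.xa 0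
        = QuaternionGroup.xa 0 * QuaternionGroup.a 1 :=
      e.injective (by rw [map_mul, map_mul, mul_comm])
    rw [QuaternionGroup.a_mul_xa, QuaternionGroup.xa_mul_a] at hcomm
    have h := QuaternionGroup.xa.inj hcomm
    have h2 : ((2 : ℕ) : ZMod (2 * n)) = 0 := by
      push_cast
      linear_combination -h
    have := (ZMod.natCast_eq_zero_iff _ _).mp h2
    have := Nat.le_of_dvd (by omega) this
    omega
  · -- dihedral
    intro m
    rcases eq_or_ne m 1 with rfl | hm
    · constructor
      intro e
      have h4 : orderOf (e (QuaternionGroup.xa 0)) = 4 :=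
        (orderOf_injective e.toMonoidHom e.injective _).trans (QuaternionGroup.orderOf_xa 0)
      have hsq : (e (QuaternionGroup.xa 0)) ^ 2 = 1 := by
        generalize e (QuaternionGroup.xa 0) = g
        revert g
        decide
      have := orderOf_dvd_of_pow_eq_one hsq
      rw [h4] at this
      omega
    · have h01 : (0 : ZMod m) ≠ 1 := by
        match m, hm with
        | 0, _ => exact (by simp : (0 : ZMod 0) ≠ 1)
        | (k+2), _ =>
          haveI : Fact (1 < k + 2) := ⟨by omega⟩
          exact zero_ne_one
      exact no_iso_of_two_two hn (DihedralGroup.orderOf_sr 0) (DihedralGroup.orderOf_sr 1)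
        (fun h => h01 (DihedralGroup.sr.inj h))
  · -- A₄
    refine no_iso_of_two_two hn (x := ⟨Equiv.swap 0 1 * Equiv.swap 2 3, ?_⟩)
      (y := ⟨Equiv.swap 0 2 * Equiv.swap 1 3, ?_⟩) ?_ ?_ ?_
    · rw [Equiv.Perm.mem_alternatingGroup]; decide
    · rw [Equiv.Perm.mem_alternatingGroup]; decide
    · exact orderOf_eq_prime (by decide) (by decide)
    · exact orderOf_eq_prime (by decide) (by decide)
    · decide
  · -- S₄
    exact no_iso_of_two_two hn (x := Equiv.swap 0 1) (y := Equiv.swap 0 2)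
      (orderOf_eq_prime (by decide) (by decide))
      (orderOf_eq_prime (by decide) (by decide)) (by decide)
  · -- A₅
    refine no_iso_of_two_two hn
      (x := ⟨Equiv.swap 0 1 * Equiv.swap 2 3, ?_⟩)
      (y := ⟨Equiv.swap 0 2 * Equiv.swap 1 3, ?_⟩) ?_ ?_ ?_
    · rw [Equiv.Perm.mem_alternatingGroup]; decide
    · rw [Equiv.Perm.mem_alternatingGroup]; decide
    · exact orderOf_eq_prime (by decide) (by decide)
    · exact orderOf_eq_prime (by decide) (by decide)
    · decide
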